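/- Let α = π / (2 arccos(1/√3)), p = (√2 − 1)/(2√2) and t > 0, and let f = f_{α,p,t}. Then f′(t/√3) = 0 and f″(t/√3) = 0; that is, the probability density f has a stationary point at x = t/√3 which is an inflection point and not a local extremum. -/

import Mathlib

open Real

/-- The mixture-of-asymmetric-Cauchy probability density `f_{α,p,t}`. -/
noncomputable def cauchyMixDensity (α p t x : ℝ) : ℝ :=
  (t * Real.cos (π / (2 * α)) / π) *
    ((x ^ 2 + t ^ 2 + 2 * (2 * p - 1) * x * t * Real.sin (π / (2 * α))) /
      (x ^ 4 + t ^ 4 + 2 * x ^ 2 * t ^ 2 * Real.cos (π / α)))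

/-- For `α = π/(2 arccos(1/√3))`, `p = (√2 − 1)/(2√2)` and
`t > 0`, the density `f = f_{α,p,t}` has a stationary point at `x = t/√3`
(`f′(t/√3) = 0`) with vanishing second derivative (`f″(t/√3) = 0`) which is an
inflection point and not a local extremum. -/
theorem cauchyMix_inflection_point (t : ℝ) (ht : 0 < t) :
    deriv (cauchyMixDensity (π / (2 * Real.arccos (1 / Real.sqrt 3)))
        ((Real.sqrt 2 - 1) / (2 * Real.sqrt 2)) t) (t / Real.sqrt 3) = 0 ∧
    deriv (deriv (cauchyMixDensity (π / (2 * Real.arccos (1 / Real.sqrt 3)))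
        ((Real.sqrt 2 - 1) / (2 * Real.sqrt 2)) t)) (t / Real.sqrt 3) = 0 ∧
    ¬ IsLocalMax (cauchyMixDensity (π / (2 * Real.arccos (1 / Real.sqrt 3)))
        ((Real.sqrt 2 - 1) / (2 * Real.sqrt 2)) t) (t / Real.sqrt 3) ∧
    ¬ IsLocalMin (cauchyMixDensity (π / (2 * Real.arccos (1 / Real.sqrt 3)))
        ((Real.sqrt 2 - 1) / (2 * Real.sqrt 2)) t) (t / Real.sqrt 3) := by
  have hs3 : Real.sqrt 3 ^ 2 = 3 := Real.sq_sqrt (by norm_num)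
  have hs0 : (0:ℝ) < Real.sqrt 3 := Real.sqrt_pos.mpr (by norm_num)
  set s : ℝ := Real.sqrt 3 with hsdef
  have hs1 : (1:ℝ) < s := by nlinarith
  have hr2 : Real.sqrt 2 ^ 2 = 2 := Real.sq_sqrt (by norm_num)
  have hr0 : (0:ℝ) < Real.sqrt 2 := Real.sqrt_pos.mpr (by norm_num)
  have hπ : (0:ℝ) < π := Real.pi_pos
  set θ : ℝ := Real.arccos (1 / s) with hθdef
  have hθpos : 0 < θ := Real.arccos_pos.mpr (by rw [div_lt_one hs0]; exact hs1)
  have hcosθ : Real.cos θ = 1 / s :=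
    Real.cos_arccos (le_trans (by norm_num : (-1:ℝ) ≤ 0) (by positivity))
      (by rw [div_le_one hs0]; linarith)
  have hsinθ : Real.sin θ = Real.sqrt 2 / s := by
    rw [hθdef, Real.sin_arccos]
    have h1 : 1 - (1 / s) ^ 2 = 2 / 3 := by
      field_simp
      linarith [hs3]
    rw [h1, show (2:ℝ)/3 = 2/3 from rfl, Real.sqrt_div (by norm_num) 3]
  have hπ2α : π / (2 * (π / (2 * θ))) = θ := by
    rw [div_eq_iff (by positivity)]; field_simp
  have hπα : π / (π / (2 * θ)) = 2 * θ := by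
    rw [div_div_eq_mul_div, mul_comm, mul_div_assoc, div_self hπ.ne', mul_one]
  have hcos2 : Real.cos (2 * θ) = -(1/3) := by
    rw [Real.cos_two_mul, hcosθ]
    field_simp
    linarith [hs3]
  -- the density in closed form
  set x₀ : ℝ := t / s with hx0def
  have hx0' : x₀ = t * s / 3 := by
    rw [hx0def, div_eq_div_iff hs0.ne' (by norm_num : (3:ℝ) ≠ 0)]
    linear_combination (-t) * hs3
  have hx0pos : 0 < x₀ := div_pos ht hs0
  set C : ℝ := t / (s * π) with hCdef
  have hCpos : 0 < C := by rw [hCdef]; positivity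
  set N : ℝ → ℝ := fun x => x ^ 2 + t ^ 2 - 2 * s / 3 * (x * t) with hNdef
  set D : ℝ → ℝ := fun x => x ^ 4 + t ^ 4 - 2 / 3 * (x ^ 2 * t ^ 2) with hDdef
  set F : ℝ → ℝ := fun x => C * (N x / D x) with hFdef
  have hDpos : ∀ x, 0 < D x := by
    intro x
    simp only [hDdef]
    nlinarith [sq_nonneg (x ^ 2 - t ^ 2), sq_nonneg (x * t), pow_pos ht 4]
  have hfx : cauchyMixDensity (π / (2 * θ)) ((Real.sqrt 2 - 1) / (2 * Real.sqrt 2)) t = F := by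
    funext x
    simp only [cauchyMixDensity, hπ2α, hπα, hcosθ, hsinθ, hcos2, hFdef, hNdef, hDdef, hCdef]
    have hnum : x ^ 2 + t ^ 2 + 2 * (2 * ((Real.sqrt 2 - 1) / (2 * Real.sqrt 2)) - 1) * x * t *
        (Real.sqrt 2 / s) = x ^ 2 + t ^ 2 - 2 * s / 3 * (x * t) := by
      field_simp
      ring_nf
      linear_combination (2 * x * t) * hs3
    rw [hnum]
    ring
  -- first derivative
  set N' : ℝ → ℝ := fun x => 2 * x - 2 * s / 3 * t with hN'def
  set D' : ℝ → ℝ := fun x => 4 * x ^ 3 - 2 / 3 * (2 * x * t ^ 2) with hD'def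
  have hN'at : ∀ x : ℝ, HasDerivAt N (N' x) x := by
    intro x
    have h1 : HasDerivAt (fun x : ℝ => x ^ 2) (2 * x) x := by simpa using hasDerivAt_pow 2 x
    have h2 : HasDerivAt (fun x : ℝ => x * t) t x := by simpa using (hasDerivAt_id x).mul_const t
    simpa [hNdef, hN'def, Pi.sub_def] using (h1.add_const (t ^ 2)).sub (h2.const_mul (2 * s / 3))
  have hD'at : ∀ x : ℝ, HasDerivAt D (D' x) x := by
    intro x
    have h1 : HasDerivAt (fun x : ℝ => x ^ 4) (4 * x ^ 3) x := by simpa using hasDerivAt_pow 4 x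
    have h2 : HasDerivAt (fun x : ℝ => x ^ 2 * t ^ 2) (2 * x * t ^ 2) x := by
      simpa using (hasDerivAt_pow 2 x).mul_const (t ^ 2)
    simpa [hDdef, hD'def, Pi.sub_def] using (h1.add_const (t ^ 4)).sub (h2.const_mul (2 / 3))
  set F1 : ℝ → ℝ := fun x => C * ((N' x * D x - N x * D' x) / D x ^ 2) with hF1def
  have hF'at : ∀ x : ℝ, HasDerivAt F (F1 x) x := fun x =>
    (((hN'at x).div (hD'at x) (hDpos x).ne')).const_mul C
  have hderivF : deriv F = F1 := funext fun x => (hF'at x).deriv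
  -- second derivative pieces
  have hN'x : HasDerivAt N' 2 x₀ := by
    have h1 : HasDerivAt (fun x : ℝ => 2 * x) 2 x₀ := by
      simpa using (hasDerivAt_id x₀).const_mul 2
    simpa [hN'def] using h1.sub_const (2 * s / 3 * t)
  have hD'x : HasDerivAt D' (12 * x₀ ^ 2 - 2 / 3 * (2 * t ^ 2)) x₀ := by
    have h1 : HasDerivAt (fun x : ℝ => 4 * x ^ 3) (12 * x₀ ^ 2) x₀ := by
      have := (hasDerivAt_pow 3 x₀).const_mul (4:ℝ)
      simpa using this.congr_deriv (by ring)
    have h2 : HasDerivAt (fun x : ℝ => 2 * x * t ^ 2) (2 * t ^ 2) x₀ := by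
      simpa using ((hasDerivAt_id x₀).const_mul 2).mul_const (t ^ 2)
    simpa [hD'def, Pi.sub_def] using h1.sub (h2.const_mul (2 / 3))
  have hNum : HasDerivAt (fun x => N' x * D x - N x * D' x)
      (2 * D x₀ + N' x₀ * D' x₀ -
        (N' x₀ * D' x₀ + N x₀ * (12 * x₀ ^ 2 - 2 / 3 * (2 * t ^ 2)))) x₀ :=
    (hN'x.mul (hD'at x₀)).sub ((hN'at x₀).mul hD'x)
  have hDen : HasDerivAt (fun x => D x ^ 2) ((2:ℕ) * D x₀ ^ (2 - 1) * D' x₀) x₀ :=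
    (hD'at x₀).pow 2
  have hF1'at : HasDerivAt F1
      (C * (((2 * D x₀ + N' x₀ * D' x₀ -
          (N' x₀ * D' x₀ + N x₀ * (12 * x₀ ^ 2 - 2 / 3 * (2 * t ^ 2)))) * D x₀ ^ 2 -
        (N' x₀ * D x₀ - N x₀ * D' x₀) * ((2:ℕ) * D x₀ ^ (2 - 1) * D' x₀)) / (D x₀ ^ 2) ^ 2)) x₀ :=
    (hNum.div hDen (pow_ne_zero 2 (hDpos x₀).ne')).const_mul C
  have hsign : ∀ y, N y * D x₀ - N x₀ * D y = -(2 * t ^ 2 / 3) * (y - x₀) ^ 3 * (y + s * t) := by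
    intro y
    simp only [hNdef, hDdef]
    rw [hx0']
    linear_combination ((-1/81) * t^6 * s^2 + (2/9) * y * t^5 * s + (-2/243) * y * t^5 * s^3
      + (-5/9) * y^2 * t^4 + (1/81) * y^2 * t^4 * s^2 + (1/9) * y^4 * t^2) * hs3
  have hFdiff : ∀ y, F y - F x₀
      = C * ((-(2 * t ^ 2 / 3) * (y - x₀) ^ 3 * (y + s * t)) / (D y * D x₀)) := by
    intro y
    simp only [hFdef]
    rw [← mul_sub, div_sub_div _ _ (hDpos y).ne' (hDpos x₀).ne',
      mul_comm (D y) (N x₀), hsign y]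
  refine ⟨?_, ?_, ?_, ?_⟩
  · rw [hfx, hderivF]
    simp only [hF1def]
    have h0 : N' x₀ * D x₀ - N x₀ * D' x₀ = 0 := by
      simp only [hN'def, hNdef, hDdef, hD'def]
      rw [hx0']
      linear_combination ((-4/27) * t^5 * s + (4/243) * t^5 * s^3) * hs3
    rw [h0, zero_div, mul_zero]
  · rw [hfx, hderivF, hF1'at.deriv]
    have h0 : (2 * D x₀ + N' x₀ * D' x₀ -
          (N' x₀ * D' x₀ + N x₀ * (12 * x₀ ^ 2 - 2 / 3 * (2 * t ^ 2)))) * D x₀ ^ 2 -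
        (N' x₀ * D x₀ - N x₀ * D' x₀) * ((2:ℕ) * D x₀ ^ (2 - 1) * D' x₀) = 0 := by
      simp only [hN'def, hNdef, hDdef, hD'def]
      push_cast
      rw [hx0']
      linear_combination ((-10/9) * t^12 + (50/243) * t^12 * s^2 + (20/2187) * t^12 * s^4
        + (-212/59049) * t^12 * s^6 + (106/177147) * t^12 * s^8
        + (-2/59049) * t^12 * s^10) * hs3
    rw [h0, zero_div, mul_zero]
  · rw [hfx]
    intro h
    obtain ⟨ε, hε, hb⟩ := Metric.eventually_nhds_iff.mp h
    have hm : 0 < min (ε / 2) (x₀ / 2) := lt_min (by linarith) (by linarith)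
    have hm2 : min (ε / 2) (x₀ / 2) ≤ x₀ / 2 := min_le_right _ _
    have hm1 : min (ε / 2) (x₀ / 2) ≤ ε / 2 := min_le_left _ _
    set y : ℝ := x₀ - min (ε / 2) (x₀ / 2) with hy
    have hy0 : 0 < y := by rw [hy]; linarith
    have hyx : y < x₀ := by rw [hy]; linarith
    have hdist : dist y x₀ < ε := by
      rw [Real.dist_eq, abs_of_nonpos (by rw [hy]; linarith)]
      rw [hy]; linarith
    have hle : F y ≤ F x₀ := hb hdist
    have hgt : 0 < F y - F x₀ := by
      rw [hFdiff y]
      have h1 : (y - x₀) ^ 3 < 0 := Odd.pow_neg (by decide) (by linarith)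
      have h2 : 0 < -(2 * t ^ 2 / 3) * (y - x₀) ^ 3 :=
        mul_pos_of_neg_of_neg (neg_lt_zero.mpr (by positivity)) h1
      have h3 : 0 < y + s * t := add_pos hy0 (mul_pos hs0 ht)
      exact mul_pos hCpos (div_pos (mul_pos h2 h3) (mul_pos (hDpos y) (hDpos x₀)))
    linarith
  · rw [hfx]
    intro h
    obtain ⟨ε, hε, hb⟩ := Metric.eventually_nhds_iff.mp h
    have hm : 0 < min (ε / 2) 1 := lt_min (by linarith) one_pos
    have hm1 : min (ε / 2) 1 ≤ ε / 2 := min_le_left _ _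
    set y : ℝ := x₀ + min (ε / 2) 1 with hy
    have hyx : x₀ < y := by rw [hy]; linarith
    have hdist : dist y x₀ < ε := by
      rw [Real.dist_eq, abs_of_nonneg (by rw [hy]; linarith)]
      rw [hy]; linarith
    have hle : F x₀ ≤ F y := hb hdist
    have hlt : F y - F x₀ < 0 := by
      rw [hFdiff y]
      have h1 : 0 < (y - x₀) ^ 3 := pow_pos (by linarith) 3
      have h2 : -(2 * t ^ 2 / 3) * (y - x₀) ^ 3 < 0 :=
        mul_neg_of_neg_of_pos (neg_lt_zero.mpr (by positivity)) h1
      have h3 : 0 < y + s * t := add_pos (lt_trans hx0pos hyx) (mul_pos hs0 ht)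
      exact mul_neg_of_pos_of_neg hCpos
        (div_neg_of_neg_of_pos (mul_neg_of_neg_of_pos h2 h3) (mul_pos (hDpos y) (hDpos x₀)))
    linarith
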